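/- There are exactly eight bijective real-algebra homomorphisms f : 𝔹ℂ → 𝔹ℂ (equivalently, exactly eight ℝ-algebra automorphisms of the bicomplex numbers). -/

import Mathlib

noncomputable section

/-- The bicomplex numbers, modeled via their idempotent representation as `ℂ × ℂ`
(componentwise addition and multiplication). -/
abbrev BC : Type := ℂ × ℂ

namespace BC

/-- The imaginary unit `i₁`. -/
def i1 : BC := (Complex.I, Complex.I)

/-- The imaginary unit `i₂`. -/
def i2 : BC := (-Complex.I, Complex.I)

/-- The hyperbolic unit `j₁ = i₁ i₂`. -/
def j1 : BC := (1, -1)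

/-- The idempotent `e₁ = (1 + j₁)/2`. -/
def e1 : BC := (1, 0)

/-- The idempotent `e₂ = (1 - j₁)/2`. -/
def e2 : BC := (0, 1)

/-- The embedding of `ℂ(i₁)` into the bicomplex numbers. -/
def C (z : ℂ) : BC := (z, z)

end BC

open BC

open scoped Classical

instance : IsAlgClosure ℝ ℂ := ⟨Complex.isAlgClosed, Algebra.IsAlgebraic.of_finite ℝ ℂ⟩
instance : IsGalois ℝ ℂ := ⟨⟩

lemma algHom_complex_bijective (φ : ℂ →ₐ[ℝ] ℂ) : Function.Bijective φ := by
  have hinj : Function.Injective φ := φ.toRingHom.injective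
  exact ⟨hinj, LinearMap.surjective_of_injective (f := φ.toLinearMap) hinj⟩

/-- The diagonal embedding. -/
def diagHom : ℂ →ₐ[ℝ] BC := AlgHom.prod (AlgHom.id ℝ ℂ) (AlgHom.id ℝ ℂ)

/-- first-component automorphism of ℂ extracted from an automorphism of BC. -/
def gOf (f : BC ≃ₐ[ℝ] BC) : ℂ ≃ₐ[ℝ] ℂ :=
  AlgEquiv.ofBijective ((AlgHom.fst ℝ ℂ ℂ).comp (f.toAlgHom.comp diagHom))
    (algHom_complex_bijective _)

/-- second-component automorphism of ℂ extracted from an automorphism of BC. -/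
def hOf (f : BC ≃ₐ[ℝ] BC) : ℂ ≃ₐ[ℝ] ℂ :=
  AlgEquiv.ofBijective ((AlgHom.snd ℝ ℂ ℂ).comp (f.toAlgHom.comp diagHom))
    (algHom_complex_bijective _)

@[simp] lemma gOf_apply (f : BC ≃ₐ[ℝ] BC) (z : ℂ) : gOf f z = (f (z, z)).1 := rfl
@[simp] lemma hOf_apply (f : BC ≃ₐ[ℝ] BC) (z : ℂ) : hOf f z = (f (z, z)).2 := rfl

/-- The product automorphism. -/
def prodE (g h : ℂ ≃ₐ[ℝ] ℂ) : BC ≃ₐ[ℝ] BC where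
  toFun p := (g p.1, h p.2)
  invFun p := (g.symm p.1, h.symm p.2)
  left_inv p := by simp
  right_inv p := by simp
  map_add' p q := by simp [Prod.ext_iff]
  map_mul' p q := by simp [Prod.ext_iff]
  commutes' r := by
    refine Prod.ext ?_ ?_ <;> simp
    · simpa using g.commutes r
    · simpa using h.commutes r

/-- The swap automorphism. -/
def swapE : BC ≃ₐ[ℝ] BC where
  toFun p := (p.2, p.1)
  invFun p := (p.2, p.1)
  left_inv p := rfl
  right_inv p := rfl
  map_add' p q := rfl
  map_mul' p q := rfl
  commutes' r := by
    refine Prod.ext ?_ ?_ <;> simp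

/-- Image of `e1` under an automorphism. -/
lemma image_e1 (f : BC ≃ₐ[ℝ] BC) : f e1 = e1 ∨ f e1 = e2 := by
  have hid : f e1 * f e1 = f e1 := by
    rw [← map_mul]; norm_num [e1, Prod.ext_iff]
  have h0 : f e1 ≠ 0 := by
    intro h
    have := f.injective (h.trans (map_zero f).symm)
    simp [e1, Prod.ext_iff] at this
  have h1 : f e1 ≠ 1 := by
    intro h
    have := f.injective (h.trans (map_one f).symm)
    simp [e1, Prod.ext_iff] at this
  have ha : (f e1).1 = 0 ∨ (f e1).1 = 1 := by
    have h : (f e1).1 * (f e1).1 = (f e1).1 := congrArg Prod.fst hid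
    have : (f e1).1 * ((f e1).1 - 1) = 0 := by ring_nf; linear_combination h
    rcases mul_eq_zero.mp this with h2 | h2
    · exact Or.inl h2
    · exact Or.inr (by linear_combination h2)
  have hb : (f e1).2 = 0 ∨ (f e1).2 = 1 := by
    have h : (f e1).2 * (f e1).2 = (f e1).2 := congrArg Prod.snd hid
    have : (f e1).2 * ((f e1).2 - 1) = 0 := by ring_nf; linear_combination h
    rcases mul_eq_zero.mp this with h2 | h2
    · exact Or.inl h2
    · exact Or.inr (by linear_combination h2)
  rcases ha with h | h <;> rcases hb with h' | h'
  · exact absurd (Prod.ext h h') h0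
  · right; exact Prod.ext h h'
  · left; exact Prod.ext h h'
  · exact absurd (Prod.ext h h') h1

lemma e1_ne_e2 : (e1 : BC) ≠ e2 := by simp [e1, e2, Prod.ext_iff]

lemma decomp (f : BC ≃ₐ[ℝ] BC) (z w : ℂ) :
    f (z, w) = f (z, z) * f e1 + f (w, w) * f e2 := by
  rw [← map_mul, ← map_mul, ← map_add]
  congr 1
  simp [e1, e2, Prod.ext_iff]

lemma fe2 (f : BC ≃ₐ[ℝ] BC) : f e2 = 1 - f e1 := by
  have : (e2 : BC) = 1 - e1 := by simp [e1, e2, Prod.ext_iff]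
  rw [this, map_sub, map_one]

lemma caseA (f : BC ≃ₐ[ℝ] BC) (hf : f e1 = e1) (z w : ℂ) :
    f (z, w) = ((f (z, z)).1, (f (w, w)).2) := by
  have h2 : f e2 = e2 := by
    rw [fe2, hf]; simp [e1, e2, Prod.ext_iff]
  rw [decomp f z w, hf, h2]
  simp [e1, e2, Prod.ext_iff]

lemma caseB (f : BC ≃ₐ[ℝ] BC) (hf : f e1 = e2) (z w : ℂ) :
    f (z, w) = ((f (w, w)).1, (f (z, z)).2) := by
  have h2 : f e2 = e1 := by
    rw [fe2, hf]; simp [e1, e2, Prod.ext_iff]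
  rw [decomp f z w, hf, h2]
  simp [e1, e2, Prod.ext_iff]

/-- The classification equivalence. -/
def Phi : (BC ≃ₐ[ℝ] BC) ≃ ((ℂ ≃ₐ[ℝ] ℂ) × (ℂ ≃ₐ[ℝ] ℂ)) × Bool where
  toFun f := ((gOf f, hOf f), if f e1 = e2 then true else false)
  invFun x := if x.2 then swapE.trans (prodE x.1.1 x.1.2) else prodE x.1.1 x.1.2
  left_inv f := by
    by_cases hf : f e1 = e2
    · simp only [hf, if_pos rfl, if_true]
      refine AlgEquiv.ext fun p => ?_
      obtain ⟨z, w⟩ := p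
      show (gOf f w, hOf f z) = f (z, w)
      rw [caseB f hf]
      rfl
    · have he : f e1 = e1 := (image_e1 f).resolve_right hf
      simp only [hf, if_neg, if_false, Bool.false_eq_true]
      refine AlgEquiv.ext fun p => ?_
      obtain ⟨z, w⟩ := p
      show (gOf f z, hOf f w) = f (z, w)
      rw [caseA f he]
      rfl
  right_inv := by
    rintro ⟨⟨g, h⟩, b⟩
    cases b
    · simp only [if_false, Bool.false_eq_true]
      refine Prod.ext (Prod.ext ?_ ?_) ?_
      · ext z; rfl
      · ext z; rfl
      · have : prodE g h e1 = e1 := by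
          show (g 1, h 0) = e1
          simp [e1]
        simp only [this]
        simp [e1_ne_e2]
    · simp only [if_true]
      refine Prod.ext (Prod.ext ?_ ?_) ?_
      · ext z; rfl
      · ext z; rfl
      · have : (swapE.trans (prodE g h)) e1 = e2 := by
          show (g 0, h 1) = e2
          simp [e2]
        simp only [this]
        simp

theorem stmt_8 : Nat.card (BC ≃ₐ[ℝ] BC) = 8 := by
  have hC : Nat.card (ℂ ≃ₐ[ℝ] ℂ) = 2 := by
    rw [IsGalois.card_aut_eq_finrank, Complex.finrank_real_complex]
  rw [Nat.card_congr Phi, Nat.card_prod, Nat.card_prod, hC,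
    Nat.card_eq_fintype_card (α := Bool), Fintype.card_bool]
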